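/- Let μ be a finite Borel measure on ℝ such that ∫_{ℝ∖{0}} sin²(τx)/x² dμ(x) ≤ B for all τ > 0. Then ∫_{ℝ∖{0}} x^{−2} dμ(x) ≤ 2B. Consequently, the class of finite measures with ∫ sin²(τx)/(τx)² dμ = O(τ^{−2}) coincides with the class of finite measures with ∫_{ℝ∖{0}} x^{−2} dμ < ∞. -/

import Mathlib

open MeasureTheory Real Filter Topology

lemma sin_sq_intervalIntegral (x T : ℝ) (hx : x ≠ 0) :
    ∫ τ in (0:ℝ)..T, Real.sin (τ * x) ^ 2 = T / 2 - Real.sin (2 * T * x) / (4 * x) := by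
  have key : ∀ τ : ℝ, HasDerivAt (fun t => t / 2 - Real.sin (2 * t * x) / (4 * x))
      (Real.sin (τ * x) ^ 2) τ := by
    intro τ
    have h1 : HasDerivAt (fun t : ℝ => 2 * t * x) (2 * x) τ := by
      simpa using ((hasDerivAt_id τ).const_mul 2).mul_const x
    have h2 : HasDerivAt (fun t => Real.sin (2 * t * x)) (Real.cos (2 * τ * x) * (2 * x)) τ :=
      (Real.hasDerivAt_sin _).comp τ h1
    have h3 := ((hasDerivAt_id τ).div_const 2).sub (h2.div_const (4 * x))
    refine h3.congr_deriv ?_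
    symm
    rw [Real.sin_sq_eq_half_sub]
    have : 2 * (τ * x) = 2 * τ * x := by ring
    rw [this]
    field_simp
    ring
  rw [intervalIntegral.integral_eq_sub_of_hasDerivAt (fun τ _ => key τ)
    ((Continuous.intervalIntegrable (by continuity)) 0 T)]
  simp

lemma stepB (x T : ℝ) (hx : x ≠ 0) (hT : 0 < T) :
    ∫⁻ τ in Set.Ioc 0 T, ENNReal.ofReal (Real.sin (τ * x) ^ 2 / x ^ 2) =
      ENNReal.ofReal ((T / 2 - Real.sin (2 * T * x) / (4 * x)) / x ^ 2) := by
  rw [← ofReal_integral_eq_lintegral_ofReal]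
  · congr 1
    rw [← intervalIntegral.integral_of_le hT.le, intervalIntegral.integral_div,
      sin_sq_intervalIntegral x T hx]
  · exact (Continuous.integrableOn_Ioc (by continuity))
  · exact Filter.Eventually.of_forall fun τ => div_nonneg (sq_nonneg _) (sq_nonneg _)

lemma kernel_meas : Measurable (fun p : ℝ × ℝ =>
    ENNReal.ofReal (Real.sin (p.1 * p.2) ^ 2 / p.2 ^ 2)) := by
  apply Measurable.ennreal_ofReal
  fun_prop

lemma keyT (B : ℝ) (μ : Measure ℝ) [IsFiniteMeasure μ]
    (h : ∀ τ : ℝ, 0 < τ →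
      ∫⁻ x in ({0}ᶜ : Set ℝ), ENNReal.ofReal (Real.sin (τ * x) ^ 2 / x ^ 2) ∂μ ≤
        ENNReal.ofReal B) (T : ℝ) (hT : 0 < T) :
    ∫⁻ x in ({0}ᶜ : Set ℝ),
      ENNReal.ofReal ((1 / 2 - Real.sin (2 * T * x) / (4 * T * x)) / x ^ 2) ∂μ ≤
      ENNReal.ofReal B := by
  have hswap := lintegral_lintegral_swap
    (μ := volume.restrict (Set.Ioc 0 T)) (ν := μ.restrict ({0}ᶜ : Set ℝ))
    (f := fun τ x => ENNReal.ofReal (Real.sin (τ * x) ^ 2 / x ^ 2))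
    kernel_meas.aemeasurable
  have e1 : ∫⁻ x in ({0}ᶜ : Set ℝ),
      ENNReal.ofReal (T * ((1 / 2 - Real.sin (2 * T * x) / (4 * T * x)) / x ^ 2)) ∂μ =
      ∫⁻ x in ({0}ᶜ : Set ℝ), ∫⁻ τ in Set.Ioc 0 T,
        ENNReal.ofReal (Real.sin (τ * x) ^ 2 / x ^ 2) ∂volume ∂μ := by
    apply lintegral_congr_ae
    filter_upwards [ae_restrict_mem (measurableSet_singleton (0:ℝ)).compl] with x hx
    rw [stepB x T hx hT]
    congr 1
    have hx' : x ≠ 0 := hx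
    field_simp
  have e2 : ∫⁻ τ in Set.Ioc 0 T, (∫⁻ x in ({0}ᶜ : Set ℝ),
      ENNReal.ofReal (Real.sin (τ * x) ^ 2 / x ^ 2) ∂μ) ∂volume ≤
      ENNReal.ofReal B * ENNReal.ofReal T := by
    calc ∫⁻ τ in Set.Ioc 0 T, (∫⁻ x in ({0}ᶜ : Set ℝ),
          ENNReal.ofReal (Real.sin (τ * x) ^ 2 / x ^ 2) ∂μ) ∂volume
        ≤ ∫⁻ _ in Set.Ioc 0 T, ENNReal.ofReal B ∂volume := by
          apply lintegral_mono_ae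
          filter_upwards [ae_restrict_mem measurableSet_Ioc] with τ hτ
          exact h τ hτ.1
      _ = ENNReal.ofReal B * ENNReal.ofReal T := by
          rw [setLIntegral_const, Real.volume_Ioc, sub_zero]
  have e3 : ENNReal.ofReal T *
      ∫⁻ x in ({0}ᶜ : Set ℝ),
        ENNReal.ofReal ((1 / 2 - Real.sin (2 * T * x) / (4 * T * x)) / x ^ 2) ∂μ ≤
      ENNReal.ofReal T * ENNReal.ofReal B := by
    rw [← lintegral_const_mul' _ _ ENNReal.ofReal_ne_top]
    calc ∫⁻ x in ({0}ᶜ : Set ℝ), ENNReal.ofReal T *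
          ENNReal.ofReal ((1 / 2 - Real.sin (2 * T * x) / (4 * T * x)) / x ^ 2) ∂μ
        = ∫⁻ x in ({0}ᶜ : Set ℝ),
          ENNReal.ofReal (T * ((1 / 2 - Real.sin (2 * T * x) / (4 * T * x)) / x ^ 2)) ∂μ := by
          apply lintegral_congr fun x => ?_
          rw [ENNReal.ofReal_mul hT.le]
      _ ≤ ENNReal.ofReal B * ENNReal.ofReal T := by rw [e1, ← hswap]; exact e2
      _ = ENNReal.ofReal T * ENNReal.ofReal B := mul_comm _ _
  exact (ENNReal.mul_le_mul_iff_right (ENNReal.ofReal_pos.mpr hT).ne' ENNReal.ofReal_ne_top).mp e3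

lemma tendsto_fn (x : ℝ) (hx : x ≠ 0) :
    Filter.Tendsto (fun n : ℕ =>
      (1 / 2 - Real.sin (2 * (n + 1 : ℝ) * x) / (4 * (n + 1 : ℝ) * x)) / x ^ 2)
      Filter.atTop (𝓝 (1 / (2 * x ^ 2))) := by
  have h0 : Filter.Tendsto (fun n : ℕ =>
      Real.sin (2 * (n + 1 : ℝ) * x) / (4 * (n + 1 : ℝ) * x)) Filter.atTop (𝓝 0) := by
    apply squeeze_zero_norm (a := fun n : ℕ => 1 / (4 * |x|) * (1 / (n + 1)))
    · intro n
      rw [norm_div]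
      have hn : (0:ℝ) < (n:ℝ) + 1 := by positivity
      have : ‖(4 * ((n:ℝ) + 1) * x)‖ = 4 * ((n:ℝ)+1) * |x| := by
        rw [Real.norm_eq_abs, abs_mul, abs_of_pos (by positivity : (0:ℝ) < 4 * ((n:ℝ)+1))]
      rw [this]
      have h1 : ‖Real.sin (2 * ((n:ℝ) + 1) * x)‖ ≤ 1 := by
        rw [Real.norm_eq_abs]; exact Real.abs_sin_le_one _
      have hden : (0:ℝ) < 4 * ((n:ℝ)+1) * |x| := by positivity
      rw [div_le_iff₀ hden]
      calc ‖Real.sin (2 * ((n:ℝ) + 1) * x)‖ ≤ 1 := h1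
        _ = 1 / (4 * |x|) * (1 / ((n:ℝ) + 1)) * (4 * ((n:ℝ)+1) * |x|) := by
            field_simp
    · have := tendsto_one_div_add_atTop_nhds_zero_nat (𝕜 := ℝ)
      simpa using this.const_mul (1 / (4 * |x|))
  have h2 := (h0.const_sub (1/2)).div_const (x ^ 2)
  have e : (1:ℝ) / (2 * x ^ 2) = (1/2 - 0) / x ^ 2 := by ring
  rw [e]
  exact h2

lemma aux_main (B : ℝ) (hB : 0 ≤ B) (μ : Measure ℝ) [IsFiniteMeasure μ]
    (h : ∀ τ : ℝ, 0 < τ →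
      ∫⁻ x in ({0}ᶜ : Set ℝ), ENNReal.ofReal (Real.sin (τ * x) ^ 2 / x ^ 2) ∂μ ≤
        ENNReal.ofReal B) :
    ∫⁻ x in ({0}ᶜ : Set ℝ), ENNReal.ofReal (x ^ (-2 : ℝ)) ∂μ ≤ ENNReal.ofReal (2 * B) := by
  set f : ℕ → ℝ → ENNReal := fun n x =>
    ENNReal.ofReal ((1 / 2 - Real.sin (2 * (n + 1 : ℝ) * x) / (4 * (n + 1 : ℝ) * x)) / x ^ 2)
    with hf
  have hfm : ∀ n, Measurable (f n) := by
    intro n; apply Measurable.ennreal_ofReal; fun_prop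
  have hbound : ∀ n : ℕ, ∫⁻ x in ({0}ᶜ : Set ℝ), f n x ∂μ ≤ ENNReal.ofReal B := fun n =>
    keyT B μ h ((n:ℝ) + 1) (by positivity)
  have fatou := lintegral_liminf_le (μ := μ.restrict ({0}ᶜ : Set ℝ)) (u := Filter.atTop) hfm
  have hliminf : Filter.atTop.liminf (fun n => ∫⁻ x in ({0}ᶜ : Set ℝ), f n x ∂μ) ≤
      ENNReal.ofReal B :=
    Filter.liminf_le_of_frequently_le (Filter.Frequently.of_forall hbound)
  have hpt : ∀ᵐ x ∂(μ.restrict ({0}ᶜ : Set ℝ)),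
      ENNReal.ofReal (1 / (2 * x ^ 2)) ≤ Filter.atTop.liminf fun n => f n x := by
    filter_upwards [ae_restrict_mem (measurableSet_singleton (0:ℝ)).compl] with x hx
    have := ((ENNReal.continuous_ofReal.tendsto _).comp (tendsto_fn x hx)).liminf_eq
    exact le_of_eq this.symm
  have half : ∫⁻ x in ({0}ᶜ : Set ℝ), ENNReal.ofReal (1 / (2 * x ^ 2)) ∂μ ≤
      ENNReal.ofReal B :=
    le_trans (lintegral_mono_ae hpt) (le_trans fatou hliminf)
  calc ∫⁻ x in ({0}ᶜ : Set ℝ), ENNReal.ofReal (x ^ (-2 : ℝ)) ∂μ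
      = ∫⁻ x in ({0}ᶜ : Set ℝ), 2 * ENNReal.ofReal (1 / (2 * x ^ 2)) ∂μ := by
        apply lintegral_congr_ae
        filter_upwards [ae_restrict_mem (measurableSet_singleton (0:ℝ)).compl] with x hx
        have hx' : (x:ℝ) ≠ 0 := hx
        have hrw : x ^ (-2 : ℝ) = 2 * (1 / (2 * x ^ 2)) := by
          rw [show (-2:ℝ) = ((-2:ℤ):ℝ) by norm_num, Real.rpow_intCast, zpow_neg,
            show ((2:ℤ)) = ((2:ℕ):ℤ) from rfl, zpow_natCast]
          field_simp
        rw [hrw, ENNReal.ofReal_mul (by norm_num : (0:ℝ) ≤ 2)]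
        norm_num
    _ = 2 * ∫⁻ x in ({0}ᶜ : Set ℝ), ENNReal.ofReal (1 / (2 * x ^ 2)) ∂μ :=
        lintegral_const_mul' _ _ (by norm_num)
    _ ≤ 2 * ENNReal.ofReal B := by exact mul_le_mul_right half 2
    _ = ENNReal.ofReal (2 * B) := by
        rw [ENNReal.ofReal_mul (by norm_num : (0:ℝ) ≤ 2)]
        norm_num

lemma rpow_neg_two_eq (x : ℝ) : x ^ (-2:ℝ) = (x ^ 2)⁻¹ := by
  rw [show (-2:ℝ) = ((-2:ℤ):ℝ) by norm_num, Real.rpow_intCast, zpow_neg,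
    show ((2:ℤ)) = ((2:ℕ):ℤ) from rfl, zpow_natCast]

theorem stmt16' (B : ℝ) (hB : 0 < B) (μ : Measure ℝ) [IsFiniteMeasure μ]
    (h : ∀ τ : ℝ, 0 < τ →
      ∫⁻ x in ({0}ᶜ : Set ℝ), ENNReal.ofReal (Real.sin (τ * x) ^ 2 / x ^ 2) ∂μ ≤
        ENNReal.ofReal B) :
    (∫⁻ x in ({0}ᶜ : Set ℝ), ENNReal.ofReal (x ^ (-2 : ℝ)) ∂μ ≤ ENNReal.ofReal (2 * B)) ∧
    (∀ ν : Measure ℝ, IsFiniteMeasure ν →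
      ((∃ C > 0, ∀ τ : ℝ, 0 < τ →
          ∫⁻ x in ({0}ᶜ : Set ℝ), ENNReal.ofReal (Real.sin (τ * x) ^ 2 / (τ * x) ^ 2) ∂ν ≤
            ENNReal.ofReal (C * τ ^ (-2 : ℝ))) ↔
        ∫⁻ x in ({0}ᶜ : Set ℝ), ENNReal.ofReal (x ^ (-2 : ℝ)) ∂ν ≠ ⊤)) := by
  constructor
  · exact aux_main B hB.le μ h
  · intro ν hν
    constructor
    · rintro ⟨C, hC, hτ⟩
      have key : ∀ τ : ℝ, 0 < τ →
          ∫⁻ x in ({0}ᶜ : Set ℝ), ENNReal.ofReal (Real.sin (τ * x) ^ 2 / x ^ 2) ∂ν ≤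
            ENNReal.ofReal C := by
        intro τ hτ'
        have e : ∀ x : ℝ, Real.sin (τ * x) ^ 2 / x ^ 2 =
            τ ^ 2 * (Real.sin (τ * x) ^ 2 / (τ * x) ^ 2) := by
          intro x
          rcases eq_or_ne x 0 with rfl | hx
          · simp
          · field_simp
        calc ∫⁻ x in ({0}ᶜ : Set ℝ), ENNReal.ofReal (Real.sin (τ * x) ^ 2 / x ^ 2) ∂ν
            = ENNReal.ofReal (τ ^ 2) * ∫⁻ x in ({0}ᶜ : Set ℝ),
                ENNReal.ofReal (Real.sin (τ * x) ^ 2 / (τ * x) ^ 2) ∂ν := by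
              rw [← lintegral_const_mul' _ _ ENNReal.ofReal_ne_top]
              apply lintegral_congr fun x => ?_
              rw [e x, ENNReal.ofReal_mul (sq_nonneg τ)]
          _ ≤ ENNReal.ofReal (τ ^ 2) * ENNReal.ofReal (C * τ ^ (-2 : ℝ)) :=
              mul_le_mul_right (hτ τ hτ') _
          _ = ENNReal.ofReal C := by
              rw [← ENNReal.ofReal_mul (sq_nonneg τ)]
              congr 1
              rw [rpow_neg_two_eq]
              field_simp
      have := aux_main C hC.le ν key
      exact ne_top_of_le_ne_top ENNReal.ofReal_ne_top this
    · intro hfin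
      set I := ∫⁻ x in ({0}ᶜ : Set ℝ), ENNReal.ofReal (x ^ (-2 : ℝ)) ∂ν with hI
      refine ⟨I.toReal + 1, by positivity, fun τ hτ' => ?_⟩
      have hτ2 : (0:ℝ) ≤ τ ^ (-2:ℝ) := Real.rpow_nonneg hτ'.le _
      calc ∫⁻ x in ({0}ᶜ : Set ℝ), ENNReal.ofReal (Real.sin (τ * x) ^ 2 / (τ * x) ^ 2) ∂ν
          ≤ ∫⁻ x in ({0}ᶜ : Set ℝ),
              ENNReal.ofReal (τ ^ (-2:ℝ)) * ENNReal.ofReal (x ^ (-2 : ℝ)) ∂ν := by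
            apply lintegral_mono_ae
            filter_upwards [ae_restrict_mem (measurableSet_singleton (0:ℝ)).compl] with x hx
            have hx' : (x:ℝ) ≠ 0 := hx
            rw [← ENNReal.ofReal_mul hτ2]
            apply ENNReal.ofReal_le_ofReal
            rw [rpow_neg_two_eq, rpow_neg_two_eq]
            have hd : (0:ℝ) < (τ * x) ^ 2 := by positivity
            rw [div_le_iff₀ hd]
            calc Real.sin (τ * x) ^ 2 ≤ 1 := Real.sin_sq_le_one _
              _ = (τ ^ 2)⁻¹ * (x ^ 2)⁻¹ * (τ * x) ^ 2 := by field_simp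
        _ = ENNReal.ofReal (τ ^ (-2:ℝ)) * I :=
            lintegral_const_mul' _ _ ENNReal.ofReal_ne_top
        _ ≤ ENNReal.ofReal (τ ^ (-2:ℝ)) * ENNReal.ofReal (I.toReal + 1) := by
            apply mul_le_mul_right
            calc I = ENNReal.ofReal I.toReal := (ENNReal.ofReal_toReal hfin).symm
              _ ≤ ENNReal.ofReal (I.toReal + 1) := ENNReal.ofReal_le_ofReal (by linarith)
        _ = ENNReal.ofReal ((I.toReal + 1) * τ ^ (-2:ℝ)) := by
            rw [ENNReal.ofReal_mul (by positivity), mul_comm]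


open MeasureTheory


theorem stmt16 (B : ℝ) (hB : 0 < B) (μ : Measure ℝ) [IsFiniteMeasure μ]
    (h : ∀ τ : ℝ, 0 < τ →
      ∫⁻ x in ({0}ᶜ : Set ℝ), ENNReal.ofReal (Real.sin (τ * x) ^ 2 / x ^ 2) ∂μ ≤
        ENNReal.ofReal B) :
    (∫⁻ x in ({0}ᶜ : Set ℝ), ENNReal.ofReal (x ^ (-2 : ℝ)) ∂μ ≤ ENNReal.ofReal (2 * B)) ∧
    -- consequently, the class of finite measures with
    -- `∫ sin²(τx)/(τx)² dν = O(τ⁻²)` coincides with the class of finite measures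
    -- with `∫_{ℝ∖{0}} x⁻² dν < ∞`
    (∀ ν : Measure ℝ, IsFiniteMeasure ν →
      ((∃ C > 0, ∀ τ : ℝ, 0 < τ →
          ∫⁻ x in ({0}ᶜ : Set ℝ), ENNReal.ofReal (Real.sin (τ * x) ^ 2 / (τ * x) ^ 2) ∂ν ≤
            ENNReal.ofReal (C * τ ^ (-2 : ℝ))) ↔
        ∫⁻ x in ({0}ᶜ : Set ℝ), ENNReal.ofReal (x ^ (-2 : ℝ)) ∂ν ≠ ⊤)) := by
  exact stmt16' B hB μ h
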